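/- Spread lemma (one-step version / Theorem 'medium'): If π is an R-spread measure on subsets of a finite set X and p ∈ (0,1), then there exists a coupling P of A ~ π, A' ~ π and V ~ Q_p under which A and V are independent, A' ⊆ A ∪ V almost surely, and E[ (|A' \ V| / |A|) · 1{A ≠ ∅} ] ≤ 7/(pR)^{1/3}. -/

import Mathlib

/-- The p-biased product measure on subsets of a finite set `X`. -/
def Qbias {X : Type*} [Fintype X] [DecidableEq X] (p : ℝ) (V : Finset X) : ℝ :=
  p ^ V.card * (1 - p) ^ (Fintype.card X - V.card)

open Finset

section Helpers

lemma binom_powerset {α : Type*} [DecidableEq α] (u v : ℝ) (s : Finset α) :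
    ∑ t ∈ s.powerset, u ^ t.card * v ^ (s.card - t.card) = (u + v) ^ s.card := by
  have h := Finset.prod_add (fun _ : α => u) (fun _ : α => v) s
  simp only [Finset.prod_const] at h
  rw [h]
  exact Finset.sum_congr rfl fun t ht => by rw [Finset.card_sdiff_of_subset (Finset.mem_powerset.1 ht)]

variable {X : Type*} [Fintype X] [DecidableEq X]

lemma Qbias_nonneg {p : ℝ} (hp0 : 0 ≤ p) (hp1 : p ≤ 1) (v : Finset X) : 0 ≤ Qbias p v :=
  mul_nonneg (pow_nonneg hp0 _) (pow_nonneg (by linarith) _)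

lemma sum_Qbias (p : ℝ) : ∑ v : Finset X, Qbias p v = 1 := by
  have h := binom_powerset p (1 - p) (Finset.univ : Finset X)
  simp only [Finset.powerset_univ, Finset.card_univ] at h
  rw [show p + (1 - p) = 1 by ring, one_pow] at h
  rw [← h]
  rfl

lemma sum_Qbias_superset (p : ℝ) (D : Finset X) :
    ∑ v : Finset X, (if D ⊆ v then Qbias p v else 0) = p ^ D.card := by
  rw [← Finset.sum_filter]
  rw [Finset.sum_nbij' (i := fun v => v \ D) (j := fun e => e ∪ D)
    (t := (Finset.univ \ D).powerset)
    (g := fun e => p ^ (e.card + D.card) * (1-p) ^ (Fintype.card X - (e.card + D.card)))]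
  · have key : ∀ e ∈ (Finset.univ \ D).powerset,
        p ^ (e.card + D.card) * (1-p) ^ (Fintype.card X - (e.card + D.card))
        = p ^ D.card * (p ^ e.card * (1-p) ^ ((Finset.univ \ D).card - e.card)) := by
      intro e he
      rw [Finset.mem_powerset] at he
      have h1 : e.card ≤ (Finset.univ \ D : Finset X).card := Finset.card_le_card he
      have h2 : (Finset.univ \ D : Finset X).card = Fintype.card X - D.card := by
        rw [Finset.card_sdiff_of_subset (Finset.subset_univ D), Finset.card_univ]
      have h3 : D.card ≤ Fintype.card X := by
        simpa [Finset.card_univ] using Finset.card_le_card (Finset.subset_univ D)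
      rw [pow_add]
      have : Fintype.card X - (e.card + D.card) = (Finset.univ \ D : Finset X).card - e.card := by
        omega
      rw [this]; ring
    rw [Finset.sum_congr rfl key, ← Finset.mul_sum, binom_powerset p (1-p),
      show p + (1 - p) = 1 by ring, one_pow, mul_one]
  · intro v hv
    simp only [Finset.mem_filter] at hv
    simp only [Finset.mem_powerset]
    exact Finset.sdiff_subset_sdiff (Finset.subset_univ v) le_rfl
  · intro e he
    simp only [Finset.mem_filter, Finset.mem_univ, true_and]
    exact Finset.subset_union_right
  · intro v hv
    simp only [Finset.mem_filter] at hv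
    exact Finset.sdiff_union_of_subset hv.2
  · intro e he
    simp only [Finset.mem_powerset] at he
    exact Finset.union_sdiff_cancel_right (Finset.disjoint_of_subset_left he Finset.sdiff_disjoint)
  · intro v hv
    simp only [Finset.mem_filter] at hv
    have hsub : D ⊆ v := hv.2
    have hle : D.card ≤ v.card := Finset.card_le_card hsub
    have hcard : (v \ D).card + D.card = v.card := by
      rw [Finset.card_sdiff_of_subset hsub]; omega
    rw [Qbias, hcard]

lemma sum_Qbias_fiber (p : ℝ) (a T : Finset X) :
    ∑ v : Finset X, (if a ∪ v = T then Qbias p v else 0)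
    = if a ⊆ T then p ^ (T.card - a.card) * (1 - p) ^ (Fintype.card X - T.card) else 0 := by
  by_cases hsub : a ⊆ T
  · rw [if_pos hsub, ← Finset.sum_filter]
    rw [Finset.sum_nbij' (i := fun v => v ∩ a) (j := fun s => (T \ a) ∪ s)
      (t := a.powerset)
      (g := fun s => p ^ ((T.card - a.card) + s.card)
        * (1-p) ^ ((Fintype.card X - T.card) + (a.card - s.card)))]
    · have key : ∀ s ∈ a.powerset,
          p ^ ((T.card - a.card) + s.card) * (1-p) ^ ((Fintype.card X - T.card) + (a.card - s.card))
          = (p ^ (T.card - a.card) * (1-p) ^ (Fintype.card X - T.card))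
            * (p ^ s.card * (1-p) ^ (a.card - s.card)) := by
        intro s _
        rw [pow_add, pow_add]; ring
      rw [Finset.sum_congr rfl key, ← Finset.mul_sum, binom_powerset p (1-p),
        show p + (1 - p) = 1 by ring, one_pow, mul_one]
    · intro v hv
      simp only [Finset.mem_filter] at hv
      exact Finset.mem_powerset.2 Finset.inter_subset_right
    · intro s hs
      simp only [Finset.mem_filter, Finset.mem_univ, true_and]
      rw [Finset.mem_powerset] at hs
      rw [← Finset.union_assoc, Finset.union_sdiff_of_subset hsub]
      exact Finset.union_eq_left.2 (hs.trans hsub)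
    · intro v hv
      simp only [Finset.mem_filter] at hv
      have hv2 := hv.2
      apply Finset.ext
      intro x
      simp only [Finset.mem_union, Finset.mem_sdiff, Finset.mem_inter]
      constructor
      · rintro (⟨hxT, hxa⟩ | ⟨hxv, _⟩)
        · rw [← hv2] at hxT
          rcases Finset.mem_union.1 hxT with h | h
          · exact absurd h hxa
          · exact h
        · exact hxv
      · intro hxv
        by_cases hxa : x ∈ a
        · exact Or.inr ⟨hxv, hxa⟩
        · exact Or.inl ⟨by rw [← hv2]; exact Finset.mem_union_right _ hxv, hxa⟩
    · intro s hs
      rw [Finset.mem_powerset] at hs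
      apply Finset.ext
      intro x
      simp only [Finset.mem_inter, Finset.mem_union, Finset.mem_sdiff]
      constructor
      · rintro ⟨(⟨_, hxa⟩ | hxs), hxa2⟩
        · exact absurd hxa2 hxa
        · exact hxs
      · intro hxs
        exact ⟨Or.inr hxs, hs hxs⟩
    · intro v hv
      simp only [Finset.mem_filter] at hv
      have hv2 := hv.2
      have hvT : v ⊆ T := by rw [← hv2]; exact Finset.subset_union_right
      have hd : v.card = (T.card - a.card) + (v ∩ a).card := by
        have h1 : (v \ a).card + (v ∩ a).card = v.card := by
          rw [Finset.card_sdiff_add_card_inter]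
        have h2 : v \ a = T \ a := by
          apply Finset.ext
          intro x
          simp only [Finset.mem_sdiff]
          constructor
          · rintro ⟨hxv, hxa⟩; exact ⟨hvT hxv, hxa⟩
          · rintro ⟨hxT, hxa⟩
            rw [← hv2] at hxT
            rcases Finset.mem_union.1 hxT with h | h
            · exact absurd h hxa
            · exact ⟨h, hxa⟩
        have h3 : (v \ a).card = T.card - a.card := by rw [h2]; exact Finset.card_sdiff_of_subset hsub
        omega
      have hTN : T.card ≤ Fintype.card X := by
        simpa [Finset.card_univ] using Finset.card_le_card (Finset.subset_univ T)
      have haT : a.card ≤ T.card := Finset.card_le_card hsub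
      have hia : (v ∩ a).card ≤ a.card := Finset.card_le_card Finset.inter_subset_right
      have hvT' : v.card ≤ T.card := Finset.card_le_card hvT
      rw [Qbias, hd]
      congr 1
      congr 1
      omega
  · rw [if_neg hsub]
    apply Finset.sum_eq_zero
    intro v _
    rw [if_neg]
    intro h
    exact hsub (h ▸ Finset.subset_union_left)

/- ## Harris inequality -/

noncomputable def Ex (p : ℝ) (s : Finset X) (f : Finset X → ℝ) : ℝ :=
  ∑ w ∈ s.powerset, p ^ w.card * (1 - p) ^ (s.card - w.card) * f w

omit [Fintype X] in
lemma Ex_empty (p : ℝ) (f : Finset X → ℝ) : Ex p ∅ f = f ∅ := by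
  simp [Ex]

omit [Fintype X] in
lemma Ex_insert (p : ℝ) {i : X} {s : Finset X} (hi : i ∉ s) (f : Finset X → ℝ) :
    Ex p (insert i s) f
      = p * Ex p s (fun w => f (insert i w)) + (1 - p) * Ex p s f := by
  rw [Ex, Finset.powerset_insert, Finset.sum_union]
  · have hcard : (insert i s).card = s.card + 1 := Finset.card_insert_of_notMem hi
    have h1 : ∑ w ∈ s.powerset, p ^ w.card * (1 - p) ^ ((insert i s).card - w.card) * f w
        = (1 - p) * Ex p s f := by
      rw [Ex, Finset.mul_sum]
      apply Finset.sum_congr rfl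
      intro w hw
      rw [Finset.mem_powerset] at hw
      have : (insert i s).card - w.card = (s.card - w.card) + 1 := by
        have := Finset.card_le_card hw; omega
      rw [this, pow_succ]; ring
    have h2 : ∑ w ∈ s.powerset.image (insert i),
          p ^ w.card * (1 - p) ^ ((insert i s).card - w.card) * f w
        = p * Ex p s (fun w => f (insert i w)) := by
      rw [Finset.sum_image, Ex, Finset.mul_sum]
      · apply Finset.sum_congr rfl
        intro w hw
        rw [Finset.mem_powerset] at hw
        have hiw : i ∉ w := fun h => hi (hw h)
        have hc : (insert i w).card = w.card + 1 := Finset.card_insert_of_notMem hiw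
        have hle : w.card ≤ s.card := Finset.card_le_card hw
        rw [hc, hcard]
        have : s.card + 1 - (w.card + 1) = s.card - w.card := by omega
        rw [this, pow_succ]; ring
      · intro w hw w' hw' hins
        rw [Finset.mem_coe, Finset.mem_powerset] at hw hw'
        have hiw : i ∉ w := fun h => hi (hw h)
        have hiw' : i ∉ w' := fun h => hi (hw' h)
        have : (insert i w).erase i = (insert i w').erase i := by rw [hins]
        rwa [Finset.erase_insert hiw, Finset.erase_insert hiw'] at this
    rw [h1, h2, add_comm]
  · rw [Finset.disjoint_left]
    intro w hw hw'
    rw [Finset.mem_powerset] at hw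
    rcases Finset.mem_image.1 hw' with ⟨w'', _, rfl⟩
    exact hi (hw (Finset.mem_insert_self i w''))

omit [Fintype X] in
lemma Ex_le_Ex (p : ℝ) (hp0 : 0 ≤ p) (hp1 : p ≤ 1) (s : Finset X) {f g : Finset X → ℝ}
    (h : ∀ w, f w ≤ g w) : Ex p s f ≤ Ex p s g := by
  apply Finset.sum_le_sum
  intro w _
  have : 0 ≤ p ^ w.card * (1 - p) ^ (s.card - w.card) :=
    mul_nonneg (pow_nonneg hp0 _) (pow_nonneg (by linarith) _)
  exact mul_le_mul_of_nonneg_left (h w) this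

omit [Fintype X] in
lemma harris_Ex (p : ℝ) (hp0 : 0 ≤ p) (hp1 : p ≤ 1) (s : Finset X) (f g : Finset X → ℝ)
    (hf : ∀ u v : Finset X, u ⊆ v → f u ≤ f v)
    (hg : ∀ u v : Finset X, u ⊆ v → g v ≤ g u) :
    Ex p s (fun w => f w * g w) ≤ Ex p s f * Ex p s g := by
  induction s using Finset.induction_on generalizing f g with
  | empty => rw [Ex_empty, Ex_empty, Ex_empty]
  | insert _ _ hi _ =>
    rename_i i s ih
    rw [Ex_insert p hi, Ex_insert p hi f, Ex_insert p hi g]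
    have ih1 : Ex p s (fun w => f (insert i w) * g (insert i w))
        ≤ Ex p s (fun w => f (insert i w)) * Ex p s (fun w => g (insert i w)) :=
      ih _ _ (fun u v huv => hf _ _ (Finset.insert_subset_insert i huv))
        (fun u v huv => hg _ _ (Finset.insert_subset_insert i huv))
    have ih0 : Ex p s (fun w => f w * g w) ≤ Ex p s f * Ex p s g := ih f g hf hg
    set F1 := Ex p s (fun w => f (insert i w))
    set F0 := Ex p s f
    set G1 := Ex p s (fun w => g (insert i w))
    set G0 := Ex p s g
    have hF : F0 ≤ F1 := Ex_le_Ex p hp0 hp1 s (fun w => hf w _ (Finset.subset_insert i w))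
    have hG : G1 ≤ G0 := Ex_le_Ex p hp0 hp1 s (fun w => hg w _ (Finset.subset_insert i w))
    have key : p * (F1 * G1) + (1 - p) * (F0 * G0)
        ≤ (p * F1 + (1 - p) * F0) * (p * G1 + (1 - p) * G0) := by
      nlinarith [mul_nonneg (mul_nonneg hp0 (by linarith : (0:ℝ) ≤ 1 - p))
        (mul_nonneg (sub_nonneg.2 hF) (sub_nonneg.2 hG))]
    calc p * Ex p s (fun w => f (insert i w) * g (insert i w))
          + (1 - p) * Ex p s (fun w => f w * g w)
        ≤ p * (F1 * G1) + (1 - p) * (F0 * G0) := by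
          have h1 := mul_le_mul_of_nonneg_left ih1 hp0
          have h2 := mul_le_mul_of_nonneg_left ih0 (by linarith : (0:ℝ) ≤ 1 - p)
          exact add_le_add h1 h2
      _ ≤ _ := key

lemma Ex_univ_eq (p : ℝ) (f : Finset X → ℝ) :
    Ex p Finset.univ f = ∑ v : Finset X, Qbias p v * f v := by
  rw [Ex, Finset.powerset_univ]
  exact Finset.sum_congr rfl fun v _ => by rw [Qbias, Finset.card_univ]

lemma harris (p : ℝ) (hp0 : 0 ≤ p) (hp1 : p ≤ 1) (f g : Finset X → ℝ)
    (hf : ∀ u v : Finset X, u ⊆ v → f u ≤ f v)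
    (hg : ∀ u v : Finset X, u ⊆ v → g v ≤ g u) :
    ∑ v : Finset X, Qbias p v * (f v * g v)
      ≤ (∑ v : Finset X, Qbias p v * f v) * (∑ v : Finset X, Qbias p v * g v) := by
  rw [← Ex_univ_eq, ← Ex_univ_eq, ← Ex_univ_eq]
  exact harris_Ex p hp0 hp1 _ f g hf hg

/- ## The tilted weights -/

noncomputable def wt (p : ℝ) (π : Finset X → ℝ) (b T : Finset X) : ℝ :=
  if b ⊆ T then π b * (p⁻¹) ^ b.card else 0

noncomputable def Wt (p : ℝ) (π : Finset X → ℝ) (T : Finset X) : ℝ :=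
  ∑ b : Finset X, wt p π b T

noncomputable def rho (p : ℝ) (π : Finset X → ℝ) (T a' : Finset X) : ℝ :=
  wt p π a' T / Wt p π T

variable (p : ℝ) (π : Finset X → ℝ)

lemma wt_nonneg (hp : 0 < p) (hπ0 : ∀ A, 0 ≤ π A) (b T : Finset X) : 0 ≤ wt p π b T := by
  unfold wt
  split
  · exact mul_nonneg (hπ0 b) (pow_nonneg (by positivity) _)
  · exact le_refl 0

lemma Wt_nonneg (hp : 0 < p) (hπ0 : ∀ A, 0 ≤ π A) (T : Finset X) : 0 ≤ Wt p π T :=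
  Finset.sum_nonneg fun b _ => wt_nonneg p π hp hπ0 b T

lemma wt_le_Wt (hp : 0 < p) (hπ0 : ∀ A, 0 ≤ π A) (b T : Finset X) :
    wt p π b T ≤ Wt p π T :=
  Finset.single_le_sum (fun b' _ => wt_nonneg p π hp hπ0 b' T) (Finset.mem_univ b)

lemma Wt_pos (hp : 0 < p) (hπ0 : ∀ A, 0 ≤ π A) {a T : Finset X} (ha : 0 < π a)
    (haT : a ⊆ T) : 0 < Wt p π T := by
  refine lt_of_lt_of_le ?_ (wt_le_Wt p π hp hπ0 a T)
  unfold wt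
  rw [if_pos haT]
  positivity

lemma Wt_mono (hp : 0 < p) (hπ0 : ∀ A, 0 ≤ π A) {T T' : Finset X} (h : T ⊆ T') :
    Wt p π T ≤ Wt p π T' := by
  apply Finset.sum_le_sum
  intro b _
  unfold wt
  by_cases hb : b ⊆ T
  · rw [if_pos hb, if_pos (hb.trans h)]
  · rw [if_neg hb]
    split
    · exact mul_nonneg (hπ0 b) (pow_nonneg (by positivity) _)
    · exact le_refl 0

lemma rho_nonneg (hp : 0 < p) (hπ0 : ∀ A, 0 ≤ π A) (T a' : Finset X) : 0 ≤ rho p π T a' :=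
  div_nonneg (wt_nonneg p π hp hπ0 a' T) (Wt_nonneg p π hp hπ0 T)

lemma sum_rho_le_one (hp : 0 < p) (hπ0 : ∀ A, 0 ≤ π A) (T : Finset X) :
    ∑ a' : Finset X, rho p π T a' ≤ 1 := by
  unfold rho
  rw [← Finset.sum_div]
  rw [← Wt]
  by_cases h : Wt p π T = 0
  · rw [h, div_zero]; exact zero_le_one
  · rw [div_self h]

lemma sum_rho_eq_one (h : Wt p π T ≠ 0) :
    ∑ a' : Finset X, rho p π T a' = 1 := by
  unfold rho
  rw [← Finset.sum_div, ← Wt, div_self h]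

lemma pi_eq_zero_of_Wt_eq_zero (hp : 0 < p) (hπ0 : ∀ A, 0 ≤ π A) {a T : Finset X}
    (haT : a ⊆ T) (h : Wt p π T = 0) : π a = 0 := by
  by_contra hne
  have : 0 < π a := lt_of_le_of_ne (hπ0 a) (Ne.symm hne)
  exact absurd h (ne_of_gt (Wt_pos p π hp hπ0 this haT))

/-- regrouping a double sum over (a, v) by the union T = a ∪ v. -/
lemma regroup (hp : 0 < p) (F : Finset X → ℝ) :
    ∑ a : Finset X, ∑ v : Finset X, π a * Qbias p v * F (a ∪ v)
      = ∑ T : Finset X, Qbias p T * Wt p π T * F T := by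
  have step1 : ∀ a v : Finset X, π a * Qbias p v * F (a ∪ v)
      = ∑ T : Finset X, (if a ∪ v = T then Qbias p v else 0) * (π a * F T) := by
    intro a v
    rw [Finset.sum_eq_single_of_mem (a ∪ v) (Finset.mem_univ _)]
    · rw [if_pos rfl]; ring
    · intro T _ hT
      rw [if_neg (fun h => hT h.symm), zero_mul]
  simp_rw [step1]
  have h1 : ∀ a : Finset X, (∑ v : Finset X, ∑ T : Finset X,
      (if a ∪ v = T then Qbias p v else 0) * (π a * F T))
      = ∑ T : Finset X, ∑ v : Finset X, (if a ∪ v = T then Qbias p v else 0) * (π a * F T) :=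
    fun a => Finset.sum_comm
  simp_rw [h1]
  rw [Finset.sum_comm]
  apply Finset.sum_congr rfl
  intro T _
  have h2 : ∀ a : Finset X, (∑ v : Finset X,
      (if a ∪ v = T then Qbias p v else 0) * (π a * F T))
      = (if a ⊆ T then p ^ (T.card - a.card) * (1 - p) ^ (Fintype.card X - T.card) else 0)
          * (π a * F T) := by
    intro a
    rw [← Finset.sum_mul, sum_Qbias_fiber]
  simp_rw [h2]
  have h3 : Qbias p T * Wt p π T * F T = ∑ a : Finset X, Qbias p T * wt p π a T * F T := by
    rw [Wt, Finset.mul_sum, Finset.sum_mul]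
  rw [h3]
  apply Finset.sum_congr rfl
  intro a _
  by_cases haT : a ⊆ T
  · rw [if_pos haT, wt, if_pos haT, Qbias]
    rw [pow_sub₀ p (ne_of_gt hp) (Finset.card_le_card haT), ← inv_pow]
    ring
  · rw [if_neg haT, wt, if_neg haT, zero_mul]
    ring

lemma sum_T_wt (hp : 0 < p) (a' : Finset X) :
    ∑ T : Finset X, Qbias p T * wt p π a' T = π a' := by
  have h : ∀ T : Finset X, Qbias p T * wt p π a' T
      = (if a' ⊆ T then Qbias p T else 0) * (π a' * (p⁻¹) ^ a'.card) := by
    intro T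
    unfold wt
    by_cases hsub : a' ⊆ T
    · rw [if_pos hsub, if_pos hsub]
    · rw [if_neg hsub, if_neg hsub]; ring
  simp_rw [h]
  rw [← Finset.sum_mul, sum_Qbias_superset]
  have hpk : p⁻¹ ^ a'.card * p ^ a'.card = 1 := by
    rw [← mul_pow, inv_mul_cancel₀ (ne_of_gt hp), one_pow]
  calc p ^ a'.card * (π a' * p⁻¹ ^ a'.card)
      = π a' * (p⁻¹ ^ a'.card * p ^ a'.card) := by ring
    _ = π a' := by rw [hpk, mul_one]

lemma sum_T_rho (hp : 0 < p) (hπ0 : ∀ A, 0 ≤ π A) (a' : Finset X) :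
    ∑ T : Finset X, Qbias p T * Wt p π T * rho p π T a' = π a' := by
  rw [← sum_T_wt p π hp a']
  apply Finset.sum_congr rfl
  intro T _
  unfold rho
  by_cases h : Wt p π T = 0
  · have hwt : wt p π a' T = 0 :=
      le_antisymm (h ▸ wt_le_Wt p π hp hπ0 a' T) (wt_nonneg p π hp hπ0 a' T)
    rw [h, hwt]
    ring
  · field_simp

/-- The key spread estimate. -/
lemma spread_swap (R : ℝ) (hR : 0 < R) (hπ0 : ∀ A, 0 ≤ π A)
    (hspread : ∀ S : Finset X,
      ∑ A ∈ Finset.univ.filter (fun A : Finset X => S ⊆ A), π A ≤ 1 / R ^ S.card)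
    (a : Finset X) (y : ℝ) (hy : 0 ≤ y) :
    ∑ a' : Finset X, π a' * (1 + y) ^ ((a ∩ a').card) ≤ (1 + y / R) ^ a.card := by
  have expand : ∀ a' : Finset X, π a' * (1 + y) ^ ((a ∩ a').card)
      = ∑ S ∈ a.powerset, (if S ⊆ a' then π a' * y ^ S.card else 0) := by
    intro a'
    have hps : (a ∩ a').powerset = a.powerset.filter (fun S => S ⊆ a') := by
      apply Finset.ext
      intro S
      simp only [Finset.mem_powerset, Finset.mem_filter, Finset.subset_inter_iff]
    have hbin : ∑ S ∈ (a ∩ a').powerset, y ^ S.card = (1 + y) ^ (a ∩ a').card := by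
      have h := binom_powerset y 1 (a ∩ a')
      simp only [one_pow, mul_one] at h
      rw [add_comm 1 y]; exact h
    rw [← hbin, hps, Finset.sum_filter, Finset.mul_sum]
    apply Finset.sum_congr rfl
    intro S _
    split
    · rfl
    · rw [mul_zero]
  simp_rw [expand]
  rw [Finset.sum_comm]
  have hstep : ∀ S ∈ a.powerset,
      (∑ a' : Finset X, if S ⊆ a' then π a' * y ^ S.card else 0)
        ≤ (y / R) ^ S.card * 1 ^ (a.card - S.card) := by
    intro S _
    have h1 : (∑ a' : Finset X, if S ⊆ a' then π a' * y ^ S.card else 0)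
        = (∑ a' ∈ Finset.univ.filter (fun A : Finset X => S ⊆ A), π a') * y ^ S.card := by
      rw [Finset.sum_mul, Finset.sum_filter]
    rw [h1, one_pow, mul_one, div_pow]
    calc (∑ a' ∈ Finset.univ.filter (fun A : Finset X => S ⊆ A), π a') * y ^ S.card
        ≤ (1 / R ^ S.card) * y ^ S.card :=
          mul_le_mul_of_nonneg_right (hspread S) (pow_nonneg hy _)
      _ = y ^ S.card / R ^ S.card := by ring
  calc ∑ S ∈ a.powerset, (∑ a' : Finset X, if S ⊆ a' then π a' * y ^ S.card else 0)
      ≤ ∑ S ∈ a.powerset, (y / R) ^ S.card * 1 ^ (a.card - S.card) :=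
        Finset.sum_le_sum hstep
    _ = (y / R + 1) ^ a.card := binom_powerset (y / R) 1 a
    _ = (1 + y / R) ^ a.card := by rw [add_comm]

end Helpers

section Main

variable {X : Type*} [Fintype X] [DecidableEq X]

/-- the (tilted) mass of sets `a'` inside `T` that overlap `a` in at least `K` points. -/
noncomputable def Hh (p : ℝ) (π : Finset X → ℝ) (K : ℕ) (a T : Finset X) : ℝ :=
  ∑ a' : Finset X,
    (if K ≤ (a ∩ a').card then π a' * (p⁻¹) ^ a'.card else 0)
      * (if a' ⊆ T then (1:ℝ) else 0)

lemma Hh_nonneg (p : ℝ) (π : Finset X → ℝ) (hp : 0 < p) (hπ0 : ∀ A, 0 ≤ π A)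
    (K : ℕ) (a T : Finset X) : 0 ≤ Hh p π K a T := by
  apply Finset.sum_nonneg
  intro a' _
  apply mul_nonneg
  · split
    · exact mul_nonneg (hπ0 a') (pow_nonneg (by positivity) _)
    · exact le_refl 0
  · split
    · exact zero_le_one
    · exact le_refl 0

lemma Hh_mono (p : ℝ) (π : Finset X → ℝ) (hp : 0 < p) (hπ0 : ∀ A, 0 ≤ π A)
    (K : ℕ) (a : Finset X) {T T' : Finset X} (h : T ⊆ T') :
    Hh p π K a T ≤ Hh p π K a T' := by
  apply Finset.sum_le_sum
  intro a' _
  apply mul_le_mul_of_nonneg_left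
  · by_cases hs : a' ⊆ T
    · rw [if_pos hs, if_pos (hs.trans h)]
    · rw [if_neg hs]
      split
      · exact zero_le_one
      · exact le_refl 0
  · split
    · exact mul_nonneg (hπ0 a') (pow_nonneg (by positivity) _)
    · exact le_refl 0

/-- The key estimate: the expected overlap-heavy mass is small. -/
lemma EH_bound (p R : ℝ) (π : Finset X → ℝ) (hp0 : 0 < p) (hp1 : p < 1) (hR0 : 0 < R)
    (hπ0 : ∀ A, 0 ≤ π A)
    (hspread : ∀ S : Finset X,
      ∑ A ∈ Finset.univ.filter (fun A : Finset X => S ⊆ A), π A ≤ 1 / R ^ S.card)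
    (δ t : ℝ) (hδ0 : 0 < δ) (ht : t = δ * (p * R)) (ht1 : 1 ≤ t) (a : Finset X) :
    ∑ v : Finset X, Qbias p v * Hh p π (⌈δ * (a.card : ℝ)⌉₊) a (a ∪ v)
      ≤ (Real.exp 1 / t) ^ ⌈δ * (a.card : ℝ)⌉₊ := by
  set K := ⌈δ * (a.card : ℝ)⌉₊ with hK
  have htp : p < t := lt_of_lt_of_le hp1 ht1
  have hy0 : (0:ℝ) ≤ t / p - 1 := by
    rw [sub_nonneg, le_div_iff₀ hp0, one_mul]
    exact htp.le
  set y := t / p - 1 with hydef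
  -- Step 1 : integrate out v
  have hswap : ∑ v : Finset X, Qbias p v * Hh p π K a (a ∪ v)
      = ∑ a' : Finset X,
        (if K ≤ (a ∩ a').card then π a' * (p⁻¹) ^ a'.card else 0) * p ^ ((a' \ a).card) := by
    unfold Hh
    simp_rw [Finset.mul_sum]
    rw [Finset.sum_comm]
    apply Finset.sum_congr rfl
    intro a' _
    have hpt : ∀ v : Finset X,
        Qbias p v * ((if K ≤ (a ∩ a').card then π a' * (p⁻¹) ^ a'.card else 0)
          * (if a' ⊆ a ∪ v then (1:ℝ) else 0))
        = (if K ≤ (a ∩ a').card then π a' * (p⁻¹) ^ a'.card else 0)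
            * (if a' \ a ⊆ v then Qbias p v else 0) := by
      intro v
      have hiff : a' ⊆ a ∪ v ↔ a' \ a ⊆ v := by
        constructor
        · intro h x hx
          rcases Finset.mem_sdiff.mp hx with ⟨hx1, hx2⟩
          rcases Finset.mem_union.mp (h hx1) with h' | h'
          · exact absurd h' hx2
          · exact h'
        · intro h x hx
          by_cases hxa : x ∈ a
          · exact Finset.mem_union_left _ hxa
          · exact Finset.mem_union_right _ (h (Finset.mem_sdiff.mpr ⟨hx, hxa⟩))
      by_cases hsub : a' \ a ⊆ v
      · rw [if_pos hsub, if_pos (hiff.mpr hsub)]; ring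
      · rw [if_neg hsub, if_neg (fun h => hsub (hiff.mp h))]; ring
    rw [Finset.sum_congr rfl (fun v _ => hpt v), ← Finset.mul_sum, sum_Qbias_superset]
  rw [hswap]
  -- Step 2 : pointwise Chernoff bound
  have hpw : ∀ a' : Finset X,
      (if K ≤ (a ∩ a').card then π a' * (p⁻¹) ^ a'.card else 0) * p ^ ((a' \ a).card)
      ≤ (1 / t) ^ K * (π a' * (1 + y) ^ ((a ∩ a').card)) := by
    intro a'
    by_cases hKle : K ≤ (a ∩ a').card
    · rw [if_pos hKle]
      set i := (a ∩ a').card with hi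
      set d := (a' \ a).card with hd
      have hcard : i + d = a'.card := by
        rw [hi, hd, Finset.inter_comm]
        exact Finset.card_inter_add_card_sdiff a' a
      have hLHS : π a' * (p⁻¹) ^ a'.card * p ^ d = π a' * (p⁻¹) ^ i := by
        rw [← hcard, pow_add, mul_assoc, mul_assoc, ← mul_pow, inv_mul_cancel₀ (ne_of_gt hp0),
          one_pow, mul_one]
      rw [hLHS]
      have h1y : 1 + y = t / p := by rw [hydef]; ring
      rw [h1y]
      have hdivpow : (t / p) ^ i = t ^ i * (p⁻¹) ^ i := by
        rw [div_pow, div_eq_mul_inv, inv_pow]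
      rw [hdivpow]
      have htK : t ^ K ≤ t ^ i := pow_le_pow_right₀ ht1 hKle
      have ht0 : 0 < t := lt_of_lt_of_le one_pos ht1
      calc π a' * (p⁻¹) ^ i = π a' * 1 * (p⁻¹) ^ i := by ring
        _ ≤ π a' * (t ^ i / t ^ K) * (p⁻¹) ^ i := by
            apply mul_le_mul_of_nonneg_right _ (pow_nonneg (by positivity) i)
            apply mul_le_mul_of_nonneg_left _ (hπ0 a')
            rw [le_div_iff₀ (by positivity), one_mul]
            exact htK
        _ = (1 / t) ^ K * (π a' * (t ^ i * (p⁻¹) ^ i)) := by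
            rw [one_div, inv_pow]
            ring
    · rw [if_neg hKle, zero_mul]
      have h1y0 : (0:ℝ) ≤ 1 + y := by linarith
      have ht0 : (0:ℝ) < t := lt_of_lt_of_le one_pos ht1
      apply mul_nonneg (pow_nonneg (by positivity) K)
      exact mul_nonneg (hπ0 a') (pow_nonneg h1y0 _)
  calc ∑ a' : Finset X,
        (if K ≤ (a ∩ a').card then π a' * (p⁻¹) ^ a'.card else 0) * p ^ ((a' \ a).card)
      ≤ ∑ a' : Finset X, (1 / t) ^ K * (π a' * (1 + y) ^ ((a ∩ a').card)) :=
        Finset.sum_le_sum fun a' _ => hpw a'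
    _ = (1 / t) ^ K * ∑ a' : Finset X, π a' * (1 + y) ^ ((a ∩ a').card) := by
        rw [Finset.mul_sum]
    _ ≤ (1 / t) ^ K * (1 + y / R) ^ a.card := by
        apply mul_le_mul_of_nonneg_left _ (pow_nonneg (by positivity) K)
        exact spread_swap π R hR0 hπ0 hspread a y hy0
    _ ≤ (1 / t) ^ K * Real.exp 1 ^ K := by
        apply mul_le_mul_of_nonneg_left _ (pow_nonneg (by positivity) K)
        have hyR : 1 + y / R ≤ Real.exp δ := by
          have h1 : y / R ≤ δ := by
            rw [hydef, ht]
            rw [div_le_iff₀ hR0]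
            rw [div_sub' (ne_of_gt hp0), div_le_iff₀ hp0]
            nlinarith
          calc 1 + y / R ≤ 1 + δ := by linarith
            _ ≤ Real.exp δ := by linarith [Real.add_one_le_exp δ]
        have h0 : (0:ℝ) ≤ 1 + y / R := by positivity
        calc (1 + y / R) ^ a.card ≤ (Real.exp δ) ^ a.card := pow_le_pow_left₀ h0 hyR _
          _ = Real.exp (a.card * δ) := by rw [← Real.exp_nat_mul]
          _ ≤ Real.exp (K : ℝ) := by
              apply Real.exp_le_exp.mpr
              calc (a.card : ℝ) * δ = δ * a.card := by ring
                _ ≤ (K : ℝ) := Nat.le_ceil _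
          _ = Real.exp 1 ^ K := by rw [← Real.exp_nat_mul, mul_one]
    _ = (Real.exp 1 / t) ^ K := by
        rw [← mul_pow]
        congr 1
        ring

end Main

set_option maxHeartbeats 1000000 in
/-- one-step spread lemma: if π is R-spread, there is a coupling P of
A ~ π, A' ~ π, V ~ Q_p with A, V independent, A' ⊆ A ∪ V a.s., and
E[(|A' \ V|/|A|)·1{A ≠ ∅}] ≤ 7/(pR)^{1/3}. -/
theorem stmt10 {X : Type*} [Fintype X] [DecidableEq X] (R : ℝ) (hR : 1 < R)
    (p : ℝ) (hp : p ∈ Set.Ioo (0:ℝ) 1)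
    (π : Finset X → ℝ) (hπ0 : ∀ A, 0 ≤ π A) (hπ1 : ∑ A : Finset X, π A = 1)
    (hspread : ∀ S : Finset X,
      ∑ A ∈ Finset.univ.filter (fun A : Finset X => S ⊆ A), π A ≤ 1 / R ^ S.card) :
    ∃ P : Finset X × Finset X × Finset X → ℝ,
      (∀ w, 0 ≤ P w) ∧
      (∑ w : Finset X × Finset X × Finset X, P w = 1) ∧
      (∀ a v : Finset X, ∑ a' : Finset X, P (a, a', v) = π a * Qbias p v) ∧
      (∀ a' : Finset X, ∑ a : Finset X, ∑ v : Finset X, P (a, a', v) = π a') ∧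
      (∀ a a' v : Finset X, ¬ a' ⊆ a ∪ v → P (a, a', v) = 0) ∧
      (∑ a : Finset X, ∑ a' : Finset X, ∑ v : Finset X,
          P (a, a', v) * (if a = ∅ then 0 else ((a' \ v).card : ℝ) / a.card)
        ≤ 7 / (p * R) ^ ((1:ℝ)/3)) := by
  obtain ⟨hp0, hp1⟩ := hp
  have hR0 : (0:ℝ) < R := lt_trans one_pos hR
  have hpR0 : 0 < p * R := mul_pos hp0 hR0
  have hQn : ∀ v : Finset X, 0 ≤ Qbias p v := fun v => Qbias_nonneg hp0.le hp1.le v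
  set Pf : Finset X × Finset X × Finset X → ℝ :=
    fun w => π w.1 * Qbias p w.2.2 * rho p π (w.1 ∪ w.2.2) w.2.1 with hPf
  have hPeq : ∀ a a' v : Finset X, Pf (a, a', v) = π a * Qbias p v * rho p π (a ∪ v) a' :=
    fun _ _ _ => rfl
  have hPnn : ∀ w, 0 ≤ Pf w := fun w =>
    mul_nonneg (mul_nonneg (hπ0 _) (hQn _)) (rho_nonneg p π hp0 hπ0 _ _)
  have hmarg3 : ∀ a v : Finset X, ∑ a' : Finset X, Pf (a, a', v) = π a * Qbias p v := by
    intro a v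
    have h : ∑ a' : Finset X, Pf (a, a', v)
        = π a * Qbias p v * ∑ a' : Finset X, rho p π (a ∪ v) a' := by
      rw [Finset.mul_sum]
    rw [h]
    by_cases hW : Wt p π (a ∪ v) = 0
    · have hπa : π a = 0 := pi_eq_zero_of_Wt_eq_zero p π hp0 hπ0 Finset.subset_union_left hW
      rw [hπa]; ring
    · rw [sum_rho_eq_one p π hW, mul_one]
  have hPQ1 : ∑ a : Finset X, ∑ v : Finset X, π a * Qbias p v = 1 := by
    have h : ∀ a : Finset X, ∑ v : Finset X, π a * Qbias p v = π a := by
      intro a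
      rw [← Finset.mul_sum, sum_Qbias, mul_one]
    rw [Finset.sum_congr rfl fun a _ => h a, hπ1]
  have htriple : ∑ a : Finset X, ∑ a' : Finset X, ∑ v : Finset X, Pf (a, a', v) = 1 := by
    have h1 : ∀ a : Finset X, ∑ a' : Finset X, ∑ v : Finset X, Pf (a, a', v)
        = ∑ v : Finset X, ∑ a' : Finset X, Pf (a, a', v) := fun a => Finset.sum_comm
    calc ∑ a : Finset X, ∑ a' : Finset X, ∑ v : Finset X, Pf (a, a', v)
        = ∑ a : Finset X, ∑ v : Finset X, π a * Qbias p v := by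
          refine Finset.sum_congr rfl fun a _ => ?_
          rw [h1 a]
          exact Finset.sum_congr rfl fun v _ => hmarg3 a v
      _ = 1 := hPQ1
  have hPzero : ∀ a a' v : Finset X, ¬ a' ⊆ a ∪ v → Pf (a, a', v) = 0 := by
    intro a a' v hns
    rw [hPeq, rho, wt, if_neg hns, zero_div, mul_zero]
  refine ⟨Pf, hPnn, ?_, hmarg3, ?_, hPzero, ?_⟩
  · rw [Fintype.sum_prod_type]
    simp_rw [Fintype.sum_prod_type]
    exact htriple
  · intro a'
    have h := regroup p π hp0 (fun T => rho p π T a')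
    calc ∑ a : Finset X, ∑ v : Finset X, Pf (a, a', v)
        = ∑ T : Finset X, Qbias p T * Wt p π T * rho p π T a' := h
      _ = π a' := sum_T_rho p π hp0 hπ0 a'
  · -- the expectation bound
    set c := (p * R) ^ ((1:ℝ)/3) with hcdef
    have hc0 : 0 < c := Real.rpow_pos_of_pos hpR0 _
    have hc3 : c ^ (3:ℕ) = p * R := by
      rw [hcdef, ← Real.rpow_natCast ((p * R) ^ ((1:ℝ)/3)) 3, ← Real.rpow_mul hpR0.le]
      norm_num
    by_cases hcase : c ≤ 7
    · -- easy case : the trivial bound E ≤ 1 suffices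
      have hpt : ∀ a a' v : Finset X,
          Pf (a, a', v) * (if a = ∅ then 0 else ((a' \ v).card : ℝ) / a.card)
            ≤ Pf (a, a', v) := by
        intro a a' v
        by_cases ha : a = ∅
        · rw [if_pos ha, mul_zero]; exact hPnn _
        · rw [if_neg ha]
          by_cases hsub : a' ⊆ a ∪ v
          · apply mul_le_of_le_one_right (hPnn _)
            have hsd : a' \ v ⊆ a := by
              intro x hx
              rcases Finset.mem_sdiff.mp hx with ⟨hx1, hx2⟩
              rcases Finset.mem_union.mp (hsub hx1) with h | h
              · exact h
              · exact absurd h hx2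
            have hc0' : (0:ℝ) < a.card := by
              exact_mod_cast Finset.card_pos.mpr (Finset.nonempty_iff_ne_empty.mpr ha)
            rw [div_le_one hc0']
            exact_mod_cast Finset.card_le_card hsd
          · rw [hPzero a a' v hsub, zero_mul]
      calc ∑ a : Finset X, ∑ a' : Finset X, ∑ v : Finset X,
            Pf (a, a', v) * (if a = ∅ then 0 else ((a' \ v).card : ℝ) / a.card)
          ≤ ∑ a : Finset X, ∑ a' : Finset X, ∑ v : Finset X, Pf (a, a', v) := by
            refine Finset.sum_le_sum fun a _ => Finset.sum_le_sum fun a' _ =>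
              Finset.sum_le_sum fun v _ => hpt a a' v
        _ = 1 := htriple
        _ ≤ 7 / c := (one_le_div hc0).mpr hcase
    · -- hard case
      push_neg at hcase
      set δ := c⁻¹ with hδdef
      have hδ0 : 0 < δ := inv_pos.mpr hc0
      have hδ_eq : δ = 1 / c := by rw [hδdef, one_div]
      have hδlt : δ < 1/7 := by
        rw [hδ_eq]
        exact one_div_lt_one_div_of_lt (by norm_num) hcase
      set t := δ * (p * R) with htdef
      have htc : t = c * c := by
        rw [htdef, ← hc3, hδdef]
        have : c ^ (3:ℕ) = c * (c * c) := by ring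
        rw [this, ← mul_assoc, inv_mul_cancel₀ (ne_of_gt hc0), one_mul]
      have ht49 : 49 ≤ t := by nlinarith
      have ht1 : (1:ℝ) ≤ t := by linarith
      have ht0 : (0:ℝ) < t := by linarith
      have hexp1 : Real.exp 1 < 3 := lt_trans Real.exp_one_lt_d9 (by norm_num)
      have hexp0 : 0 < Real.exp 1 := Real.exp_pos 1
      have heot1 : Real.exp 1 / t ≤ 1 := by
        rw [div_le_one ht0]; linarith
      have heot0 : 0 ≤ Real.exp 1 / t := by positivity
      have hδ2t : δ ^ 2 * t = 1 := by
        rw [htc, hδdef]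
        field_simp
      have het_eq : Real.exp 1 / t = Real.exp 1 * δ ^ 2 := by
        rw [div_eq_iff (ne_of_gt ht0), mul_assoc, mul_comm (δ^2) t]
        nlinarith [hδ2t]
      -- Step A : pointwise bound on the inner sum over a'
      have hinner : ∀ (a v : Finset X), a ≠ ∅ → ∀ a' : Finset X,
          rho p π (a ∪ v) a' * (((a' \ v).card : ℝ) / a.card)
          ≤ δ * rho p π (a ∪ v) a'
            + ((if ⌈δ * (a.card : ℝ)⌉₊ ≤ (a ∩ a').card then π a' * (p⁻¹) ^ a'.card else 0)
                * (if a' ⊆ a ∪ v then (1:ℝ) else 0)) / Wt p π (a ∪ v) := by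
        intro a v ha a'
        have hcard0 : (0:ℝ) < a.card := by
          exact_mod_cast Finset.card_pos.mpr (Finset.nonempty_iff_ne_empty.mpr ha)
        have hrnn : 0 ≤ rho p π (a ∪ v) a' := rho_nonneg p π hp0 hπ0 _ _
        by_cases hsub : a' ⊆ a ∪ v
        · have hsd : a' \ v ⊆ a ∩ a' := by
            intro x hx
            rcases Finset.mem_sdiff.mp hx with ⟨hx1, hx2⟩
            refine Finset.mem_inter.mpr ⟨?_, hx1⟩
            rcases Finset.mem_union.mp (hsub hx1) with h | h
            · exact h
            · exact absurd h hx2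
          have hrho_eq : rho p π (a ∪ v) a' = (π a' * (p⁻¹) ^ a'.card) / Wt p π (a ∪ v) := by
            rw [rho, wt, if_pos hsub]
          by_cases hK : ⌈δ * (a.card : ℝ)⌉₊ ≤ (a ∩ a').card
          · rw [if_pos hK, if_pos hsub, mul_one, ← hrho_eq]
            have hr1 : ((a' \ v).card : ℝ) / a.card ≤ 1 := by
              rw [div_le_one hcard0]
              exact_mod_cast Finset.card_le_card (hsd.trans Finset.inter_subset_left)
            have h1 := mul_le_of_le_one_right hrnn hr1
            have h2 : 0 ≤ δ * rho p π (a ∪ v) a' := mul_nonneg hδ0.le hrnn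
            linarith
          · rw [if_neg hK, zero_mul, zero_div, add_zero]
            have hilt : ((a ∩ a').card : ℝ) < δ * a.card := Nat.lt_ceil.mp (lt_of_not_ge hK)
            have hle : ((a' \ v).card : ℝ) ≤ ((a ∩ a').card : ℝ) := by
              exact_mod_cast Finset.card_le_card hsd
            have hratio : ((a' \ v).card : ℝ) / a.card ≤ δ := by
              rw [div_le_iff₀ hcard0]
              linarith
            calc rho p π (a ∪ v) a' * (((a' \ v).card : ℝ) / a.card)
                ≤ rho p π (a ∪ v) a' * δ := mul_le_mul_of_nonneg_left hratio hrnn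
              _ = δ * rho p π (a ∪ v) a' := by ring
        · have h0 : rho p π (a ∪ v) a' = 0 := by rw [rho, wt, if_neg hsub, zero_div]
          rw [h0, if_neg hsub]
          simp
      -- Step A aggregated over a'
      have hclaimA : ∀ a v : Finset X,
          (∑ a' : Finset X, Pf (a, a', v)
            * (if a = ∅ then 0 else ((a' \ v).card : ℝ) / a.card))
          ≤ π a * Qbias p v
            * (δ + (if a = ∅ then 0
                else Hh p π (⌈δ * (a.card : ℝ)⌉₊) a (a ∪ v) / Wt p π (a ∪ v))) := by
        intro a v
        by_cases ha : a = ∅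
        · simp only [if_pos ha, mul_zero, Finset.sum_const_zero, add_zero]
          exact mul_nonneg (mul_nonneg (hπ0 a) (hQn v)) hδ0.le
        · simp only [if_neg ha]
          have hrw : ∀ a' : Finset X,
              Pf (a, a', v) * (((a' \ v).card : ℝ) / a.card)
              = π a * Qbias p v * (rho p π (a ∪ v) a' * (((a' \ v).card : ℝ) / a.card)) := by
            intro a'
            rw [hPeq]; ring
          rw [Finset.sum_congr rfl fun a' _ => hrw a', ← Finset.mul_sum]
          apply mul_le_mul_of_nonneg_left _ (mul_nonneg (hπ0 a) (hQn v))
          calc ∑ a' : Finset X, rho p π (a ∪ v) a' * (((a' \ v).card : ℝ) / a.card)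
              ≤ ∑ a' : Finset X, (δ * rho p π (a ∪ v) a'
                + ((if ⌈δ * (a.card : ℝ)⌉₊ ≤ (a ∩ a').card then π a' * (p⁻¹) ^ a'.card else 0)
                    * (if a' ⊆ a ∪ v then (1:ℝ) else 0)) / Wt p π (a ∪ v)) :=
                Finset.sum_le_sum fun a' _ => hinner a v ha a'
            _ = δ * (∑ a' : Finset X, rho p π (a ∪ v) a')
                  + Hh p π (⌈δ * (a.card : ℝ)⌉₊) a (a ∪ v) / Wt p π (a ∪ v) := by
                rw [Finset.sum_add_distrib, ← Finset.mul_sum, Hh, Finset.sum_div]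
            _ ≤ δ * 1 + Hh p π (⌈δ * (a.card : ℝ)⌉₊) a (a ∪ v) / Wt p π (a ∪ v) := by
                have := sum_rho_le_one p π hp0 hπ0 (a ∪ v)
                have h2 := mul_le_mul_of_nonneg_left this hδ0.le
                linarith
            _ = δ + Hh p π (⌈δ * (a.card : ℝ)⌉₊) a (a ∪ v) / Wt p π (a ∪ v) := by
                rw [mul_one]
      -- Step B : per-a bound via Harris
      have hclaimB : ∀ a : Finset X,
          (∑ v : Finset X, π a * Qbias p v
            * (if a = ∅ then 0
                else Hh p π (⌈δ * (a.card : ℝ)⌉₊) a (a ∪ v) / Wt p π (a ∪ v)))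
          ≤ Real.exp 1 * δ ^ 2
              * ∑ v : Finset X, π a * Qbias p v * (Wt p π (a ∪ v))⁻¹ := by
        intro a
        have hRHS0 : 0 ≤ Real.exp 1 * δ ^ 2
            * ∑ v : Finset X, π a * Qbias p v * (Wt p π (a ∪ v))⁻¹ := by
          apply mul_nonneg (by positivity)
          apply Finset.sum_nonneg
          intro v _
          exact mul_nonneg (mul_nonneg (hπ0 a) (hQn v))
            (inv_nonneg.mpr (Wt_nonneg p π hp0 hπ0 _))
        by_cases ha : a = ∅
        · simp only [if_pos ha, mul_zero, Finset.sum_const_zero]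
          exact hRHS0
        · by_cases hπa : π a = 0
          · have hz : ∀ v : Finset X, π a * Qbias p v
                * (if a = ∅ then 0
                    else Hh p π (⌈δ * (a.card : ℝ)⌉₊) a (a ∪ v) / Wt p π (a ∪ v)) = 0 := by
              intro v; rw [hπa, zero_mul, zero_mul]
            rw [Finset.sum_congr rfl fun v _ => hz v, Finset.sum_const_zero]
            exact hRHS0
          · have hπa0 : 0 < π a := lt_of_le_of_ne (hπ0 a) (Ne.symm hπa)
            simp only [if_neg ha]
            -- rewrite LHS as π a * ∑ v Q v * (f v * g v)
            set K := ⌈δ * (a.card : ℝ)⌉₊ with hKdef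
            have hK1 : 1 ≤ K := by
              rw [hKdef]
              refine Nat.one_le_iff_ne_zero.mpr (Nat.pos_iff_ne_zero.mp (Nat.ceil_pos.mpr ?_))
              have : (0:ℝ) < a.card := by
                exact_mod_cast Finset.card_pos.mpr (Finset.nonempty_iff_ne_empty.mpr ha)
              positivity
            have hrw : ∀ v : Finset X,
                π a * Qbias p v * (Hh p π K a (a ∪ v) / Wt p π (a ∪ v))
                = π a * (Qbias p v
                    * (Hh p π K a (a ∪ v) * (Wt p π (a ∪ v))⁻¹)) := by
              intro v
              rw [div_eq_mul_inv]; ring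
            rw [Finset.sum_congr rfl fun v _ => hrw v, ← Finset.mul_sum]
            have hharris := harris p hp0.le hp1.le
              (fun v => Hh p π K a (a ∪ v))
              (fun v => (Wt p π (a ∪ v))⁻¹)
              (fun u v huv => Hh_mono p π hp0 hπ0 K a
                (Finset.union_subset_union (Finset.Subset.refl a) huv))
              (fun u v huv => by
                have h1 : 0 < Wt p π (a ∪ u) :=
                  Wt_pos p π hp0 hπ0 hπa0 Finset.subset_union_left
                have h2 : Wt p π (a ∪ u) ≤ Wt p π (a ∪ v) :=
                  Wt_mono p π hp0 hπ0 (Finset.union_subset_union (Finset.Subset.refl a) huv)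
                exact inv_anti₀ h1 h2)
            have hEH := EH_bound p R π hp0 hp1 hR0 hπ0 hspread δ t hδ0 htdef ht1 a
            have hEH2 : ∑ v : Finset X, Qbias p v * Hh p π K a (a ∪ v)
                ≤ Real.exp 1 * δ ^ 2 := by
              calc ∑ v : Finset X, Qbias p v * Hh p π K a (a ∪ v)
                  ≤ (Real.exp 1 / t) ^ K := hEH
                _ ≤ (Real.exp 1 / t) ^ 1 := pow_le_pow_of_le_one heot0 heot1 hK1
                _ = Real.exp 1 / t := pow_one _
                _ = Real.exp 1 * δ ^ 2 := het_eq
            have hG0 : 0 ≤ ∑ v : Finset X, Qbias p v * (Wt p π (a ∪ v))⁻¹ := by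
              apply Finset.sum_nonneg
              intro v _
              exact mul_nonneg (hQn v) (inv_nonneg.mpr (Wt_nonneg p π hp0 hπ0 _))
            calc π a * ∑ v : Finset X, Qbias p v
                  * (Hh p π K a (a ∪ v) * (Wt p π (a ∪ v))⁻¹)
                ≤ π a * ((∑ v : Finset X, Qbias p v * Hh p π K a (a ∪ v))
                    * (∑ v : Finset X, Qbias p v * (Wt p π (a ∪ v))⁻¹)) :=
                  mul_le_mul_of_nonneg_left hharris (hπ0 a)
              _ ≤ π a * ((Real.exp 1 * δ ^ 2)
                    * (∑ v : Finset X, Qbias p v * (Wt p π (a ∪ v))⁻¹)) := by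
                  apply mul_le_mul_of_nonneg_left _ (hπ0 a)
                  exact mul_le_mul_of_nonneg_right hEH2 hG0
              _ = Real.exp 1 * δ ^ 2
                    * ∑ v : Finset X, π a * Qbias p v * (Wt p π (a ∪ v))⁻¹ := by
                  rw [Finset.mul_sum, Finset.mul_sum, Finset.mul_sum]
                  refine Finset.sum_congr rfl fun v _ => by ring
      -- Step IV : the normalization identity
      have hstepIV : ∑ a : Finset X, ∑ v : Finset X,
          π a * Qbias p v * (Wt p π (a ∪ v))⁻¹ ≤ 1 := by
        have h := regroup p π hp0 (fun T => (Wt p π T)⁻¹)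
        rw [h]
        calc ∑ T : Finset X, Qbias p T * Wt p π T * (Wt p π T)⁻¹
            ≤ ∑ T : Finset X, Qbias p T := by
              apply Finset.sum_le_sum
              intro T _
              rw [mul_assoc]
              apply mul_le_of_le_one_right (hQn T)
              by_cases hW : Wt p π T = 0
              · rw [hW, zero_mul]; exact zero_le_one
              · rw [mul_inv_cancel₀ hW]
          _ = 1 := sum_Qbias p
      -- assemble
      have hδc : 7 / c = 7 * δ := by rw [hδdef, div_eq_mul_inv]
      rw [hδc]
      calc ∑ a : Finset X, ∑ a' : Finset X, ∑ v : Finset X,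
            Pf (a, a', v) * (if a = ∅ then 0 else ((a' \ v).card : ℝ) / a.card)
          = ∑ a : Finset X, ∑ v : Finset X, ∑ a' : Finset X,
            Pf (a, a', v) * (if a = ∅ then 0 else ((a' \ v).card : ℝ) / a.card) := by
            exact Finset.sum_congr rfl fun a _ => Finset.sum_comm
        _ ≤ ∑ a : Finset X, ∑ v : Finset X, π a * Qbias p v
              * (δ + (if a = ∅ then 0
                  else Hh p π (⌈δ * (a.card : ℝ)⌉₊) a (a ∪ v) / Wt p π (a ∪ v))) := by
            refine Finset.sum_le_sum fun a _ => Finset.sum_le_sum fun v _ => hclaimA a v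
        _ = δ + ∑ a : Finset X, ∑ v : Finset X, π a * Qbias p v
              * (if a = ∅ then 0
                  else Hh p π (⌈δ * (a.card : ℝ)⌉₊) a (a ∪ v) / Wt p π (a ∪ v)) := by
            have hsplit : ∀ a v : Finset X, π a * Qbias p v
                * (δ + (if a = ∅ then 0
                    else Hh p π (⌈δ * (a.card : ℝ)⌉₊) a (a ∪ v) / Wt p π (a ∪ v)))
                = π a * Qbias p v * δ + π a * Qbias p v
                  * (if a = ∅ then 0
                      else Hh p π (⌈δ * (a.card : ℝ)⌉₊) a (a ∪ v) / Wt p π (a ∪ v)) := by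
              intro a v; ring
            simp_rw [hsplit, Finset.sum_add_distrib]
            congr 1
            have : ∀ a : Finset X, ∑ v : Finset X, π a * Qbias p v * δ
                = (∑ v : Finset X, π a * Qbias p v) * δ := by
              intro a; rw [Finset.sum_mul]
            rw [Finset.sum_congr rfl fun a _ => this a, ← Finset.sum_mul, hPQ1, one_mul]
        _ ≤ δ + Real.exp 1 * δ ^ 2
              * ∑ a : Finset X, ∑ v : Finset X, π a * Qbias p v * (Wt p π (a ∪ v))⁻¹ := by
            have h := Finset.sum_le_sum fun a (_ : a ∈ Finset.univ) => hclaimB a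
            rw [← Finset.mul_sum] at h
            linarith
        _ ≤ δ + Real.exp 1 * δ ^ 2 * 1 := by
            have := mul_le_mul_of_nonneg_left hstepIV (by positivity : (0:ℝ) ≤ Real.exp 1 * δ ^ 2)
            linarith
        _ ≤ 7 * δ := by
            have hs2 : δ * δ ≤ (1/7) * δ := mul_le_mul_of_nonneg_right hδlt.le hδ0.le
            have hs1 : Real.exp 1 * δ ^ 2 ≤ 3 * (δ * δ) := by
              rw [pow_two]
              exact mul_le_mul_of_nonneg_right hexp1.le (mul_nonneg hδ0.le hδ0.le)
            linarith
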